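/- Let G = (V, E) be an undirected connected simple graph on V = {1,…,N} with N ≥ 2, let a_i ∈ ℝ^N for i ∈ V be such that the matrix A with rows a_1ᵀ,…,a_Nᵀ is nonsingular, let α_i > 0 for i ∈ V and β_{{i,j}} > 0 for {i,j} ∈ E. Let P ∈ ℝ^{N²×N²} be the block matrix P = blockdiag(α_1 a_1 a_1ᵀ, …, α_N a_N a_Nᵀ) + L_β ⊗ I_N, where L_β ∈ ℝ^{N×N} is the weighted Laplacian of G with (L_β)_{ii} = Σ_{j : {i,j} ∈ E} β_{{i,j}}, (L_β)_{ij} = −β_{{i,j}} if {i,j} ∈ E, and (L_β)_{ij} = 0 otherwise, and ⊗ is the Kronecker product. Then P is symmetric positive definite. -/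

import Mathlib

open Matrix Finset

lemma lap_quad_aux (N : ℕ) (G : SimpleGraph (Fin N)) [DecidableRel G.Adj]
    (β : Fin N → Fin N → ℝ) (hβsym : ∀ i j, β i j = β j i)
    (Lβ : Matrix (Fin N) (Fin N) ℝ)
    (hL : ∀ i j, Lβ i j =
      if i = j then ∑ k ∈ Finset.univ.filter (fun k => G.Adj i k), β i k
      else if G.Adj i j then -β i j else 0)
    (y : Fin N → ℝ) :
    ∑ i, ∑ j, Lβ i j * (y i * y j)
      = (1/2) * ∑ i, ∑ j, (if G.Adj i j then β i j * (y i - y j)^2 else 0) := by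
  have step1 : ∀ i, ∑ j, Lβ i j * (y i * y j)
      = ∑ j, (if G.Adj i j then β i j * (y i * y i - y i * y j) else 0) := by
    intro i
    have key : ∀ j, Lβ i j * (y i * y j) =
        (if i = j then (∑ k ∈ Finset.univ.filter (fun k => G.Adj i k), β i k) * (y i * y j) else 0)
        + (if G.Adj i j then -β i j * (y i * y j) else 0) := by
      intro j
      rw [hL]
      by_cases h : i = j
      · subst h; simp [G.irrefl]
      · simp only [h, if_false]
        by_cases h2 : G.Adj i j <;> simp [h2]
    rw [Finset.sum_congr rfl (fun j _ => key j), Finset.sum_add_distrib,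
      Finset.sum_ite_eq Finset.univ i (fun j => (∑ k ∈ Finset.univ.filter (fun k => G.Adj i k), β i k) * (y i * y j))]
    simp only [Finset.mem_univ, if_true]
    rw [Finset.sum_mul, Finset.sum_filter, ← Finset.sum_add_distrib]
    refine Finset.sum_congr rfl fun j _ => ?_
    by_cases h2 : G.Adj i j
    · simp [h2]; ring
    · simp [h2]
  simp only [step1]
  have comm : ∑ i, ∑ j, (if G.Adj i j then β i j * (y i * y i - y i * y j) else 0)
      = ∑ i, ∑ j, (if G.Adj j i then β j i * (y j * y j - y j * y i) else 0) :=
    Finset.sum_comm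
  have h2 : (2:ℝ) * ∑ i, ∑ j, (if G.Adj i j then β i j * (y i * y i - y i * y j) else 0)
      = ∑ i, ∑ j, (if G.Adj i j then β i j * (y i - y j)^2 else 0) := by
    rw [two_mul]
    nth_rewrite 2 [comm]
    rw [← Finset.sum_add_distrib]
    refine Finset.sum_congr rfl fun i _ => ?_
    rw [← Finset.sum_add_distrib]
    refine Finset.sum_congr rfl fun j _ => ?_
    by_cases h : G.Adj i j
    · rw [if_pos h, if_pos (G.adj_symm h), if_pos h, hβsym j i]; ring
    · rw [if_neg h, if_neg (fun hh => h (G.adj_symm hh)), if_neg h, add_zero]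
  linarith

lemma quad_aux (N : ℕ)
    (a : Fin N → Fin N → ℝ) (α : Fin N → ℝ)
    (Lβ : Matrix (Fin N) (Fin N) ℝ)
    (P : Matrix (Fin N × Fin N) (Fin N × Fin N) ℝ)
    (hP : ∀ p q, P p q =
      (if p.1 = q.1 then α p.1 * (a p.1 p.2 * a p.1 q.2) else 0) +
        Lβ p.1 q.1 * (if p.2 = q.2 then 1 else 0))
    (x : Fin N × Fin N → ℝ) :
    dotProduct x (P *ᵥ x) =
      (∑ i, α i * (∑ k, a i k * x (i,k))^2) +
      ∑ k, ∑ i, ∑ j, Lβ i j * (x (i,k) * x (j,k)) := by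
  simp only [dotProduct, mulVec, Finset.mul_sum]
  rw [Fintype.sum_prod_type]
  have : ∀ (i : Fin N) (k : Fin N), ∑ q : Fin N × Fin N, x (i,k) * (P (i,k) q * x q)
      = (∑ l, x (i,k) * (α i * (a i k * a i l) * x (i,l)))
        + ∑ j, x (i,k) * (Lβ i j * x (j,k)) := by
    intro i k
    rw [Fintype.sum_prod_type]
    have : ∀ (j l : Fin N), x (i,k) * (P (i,k) (j,l) * x (j,l))
        = (if i = j then x (i,k) * (α i * (a i k * a i l) * x (i,l)) else 0)
          + (if k = l then x (i,k) * (Lβ i j * x (j,l)) else 0) := by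
      intro j l
      rw [hP]
      by_cases h : i = j
      · subst h
        by_cases h2 : k = l
        · subst h2; simp; ring
        · simp [h2]
      · by_cases h2 : k = l
        · subst h2; simp [h]
        · simp [h, h2]
    simp only [this, Finset.sum_add_distrib]
    congr 1
    · rw [Finset.sum_comm]
      simp [Finset.sum_ite_eq]
    · refine Finset.sum_congr rfl fun j _ => ?_
      simp [Finset.sum_ite_eq]
  simp only [this, Finset.sum_add_distrib]
  congr 1
  · refine Finset.sum_congr rfl fun i _ => ?_
    rw [pow_two, Finset.sum_mul_sum, Finset.mul_sum]
    refine Finset.sum_congr rfl fun k _ => ?_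
    rw [Finset.mul_sum]
    refine Finset.sum_congr rfl fun l _ => ?_
    ring
  · rw [Finset.sum_comm]
    refine Finset.sum_congr rfl fun k _ => Finset.sum_congr rfl fun i _ =>
      Finset.sum_congr rfl fun j _ => by ring

/-- The matrix `P = blockdiag(α_1 a_1 a_1ᵀ, …, α_N a_N a_Nᵀ) + L_β ⊗ I_N`, where `L_β` is
the weighted Laplacian of the connected graph `G` and `A` (with rows `a_iᵀ`) is nonsingular,
is symmetric positive definite.  Here `P` is indexed by pairs `(i,k)`:
`P((i,k),(j,l)) = [i = j] α_i a_i(k) a_i(l) + L_β(i,j) [k = l]`. -/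
theorem blockdiag_add_kronecker_laplacian_posdef
    (N : ℕ) (hN : 2 ≤ N) (G : SimpleGraph (Fin N)) [DecidableRel G.Adj]
    (hG : G.Connected)
    (a : Fin N → Fin N → ℝ)
    (A : Matrix (Fin N) (Fin N) ℝ) (hA : A = Matrix.of a) (hdet : IsUnit A.det)
    (α : Fin N → ℝ) (hα : ∀ i, 0 < α i)
    (β : Fin N → Fin N → ℝ) (hβsym : ∀ i j, β i j = β j i)
    (hβ : ∀ i j, G.Adj i j → 0 < β i j)
    (Lβ : Matrix (Fin N) (Fin N) ℝ)
    (hL : ∀ i j, Lβ i j =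
      if i = j then ∑ k ∈ Finset.univ.filter (fun k => G.Adj i k), β i k
      else if G.Adj i j then -β i j else 0)
    (P : Matrix (Fin N × Fin N) (Fin N × Fin N) ℝ)
    (hP : ∀ p q, P p q =
      (if p.1 = q.1 then α p.1 * (a p.1 p.2 * a p.1 q.2) else 0) +
        Lβ p.1 q.1 * (if p.2 = q.2 then 1 else 0)) :
    P.IsSymm ∧ P.PosDef := by
  have hLsym : ∀ i j, Lβ i j = Lβ j i := by
    intro i j
    rw [hL, hL]
    by_cases h : i = j
    · subst h; rfl
    · simp only [h, Ne.symm h, if_false]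
      by_cases h2 : G.Adj i j
      · rw [if_pos h2, if_pos (G.adj_symm h2), hβsym]
      · rw [if_neg h2, if_neg (fun hh => h2 (G.adj_symm hh))]
  have hPsym : ∀ p q, P q p = P p q := by
    intro p q
    rw [hP, hP]
    congr 1
    · by_cases h : p.1 = q.1
      · rw [if_pos h.symm, if_pos h, h]; ring
      · rw [if_neg (Ne.symm h), if_neg h]
    · rw [hLsym]
      by_cases h : p.2 = q.2
      · rw [if_pos h.symm, if_pos h]
      · rw [if_neg (Ne.symm h), if_neg h]
  have hsymm : P.IsSymm := Matrix.ext fun p q => by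
    rw [Matrix.transpose_apply]; exact hPsym p q
  refine ⟨hsymm, Matrix.PosDef.of_dotProduct_mulVec_pos (Matrix.IsHermitian.ext fun p q => by rw [star_trivial]; exact hPsym p q) ?_⟩
  intro x hx
  rw [show star x = x from funext fun p => star_trivial _]
  have hform : dotProduct x (P *ᵥ x) = (∑ i, α i * (∑ k, a i k * x (i,k))^2)
      + ∑ k, (1/2) * ∑ i, ∑ j, (if G.Adj i j then β i j * (x (i,k) - x (j,k))^2 else 0) := by
    rw [quad_aux N a α Lβ P hP x]
    congr 1
    exact Finset.sum_congr rfl fun k _ =>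
      lap_quad_aux N G β hβsym Lβ hL (fun i => x (i,k))
  have hterm : ∀ (k i j : Fin N),
      (0:ℝ) ≤ (if G.Adj i j then β i j * (x (i,k) - x (j,k))^2 else 0) := by
    intro k i j
    split_ifs with h
    · exact mul_nonneg (hβ i j h).le (sq_nonneg _)
    · exact le_refl 0
  have h1 : (0:ℝ) ≤ ∑ i, α i * (∑ k, a i k * x (i,k))^2 :=
    Finset.sum_nonneg fun i _ => mul_nonneg (hα i).le (sq_nonneg _)
  have h2 : (0:ℝ) ≤ ∑ k, (1/2) * ∑ i, ∑ j,
      (if G.Adj i j then β i j * (x (i,k) - x (j,k))^2 else 0) :=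
    Finset.sum_nonneg fun k _ => mul_nonneg (by norm_num)
      (Finset.sum_nonneg fun i _ => Finset.sum_nonneg fun j _ => hterm k i j)
  have hnonneg : 0 ≤ dotProduct x (P *ᵥ x) := by
    rw [hform]; exact add_nonneg h1 h2
  refine lt_of_le_of_ne hnonneg fun heq => hx ?_
  -- from equality to zero, derive x = 0
  have hzero : (∑ i, α i * (∑ k, a i k * x (i,k))^2)
      + ∑ k, (1/2) * ∑ i, ∑ j, (if G.Adj i j then β i j * (x (i,k) - x (j,k))^2 else 0) = 0 := by
    rw [← hform, ← heq]
  have hz1 : (∑ i, α i * (∑ k, a i k * x (i,k))^2) = 0 := by linarith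
  have hz2 : (∑ k, (1/2) * ∑ i, ∑ j,
      (if G.Adj i j then β i j * (x (i,k) - x (j,k))^2 else 0)) = 0 := by linarith
  have hS : ∀ i, ∑ k, a i k * x (i,k) = 0 := by
    intro i
    have := (Finset.sum_eq_zero_iff_of_nonneg
      (fun i _ => mul_nonneg (hα i).le (sq_nonneg (∑ k, a i k * x (i,k))))).mp hz1 i
      (Finset.mem_univ i)
    rcases mul_eq_zero.mp this with h | h
    · exact absurd h (hα i).ne'
    · exact pow_eq_zero_iff (by norm_num) |>.mp h
  have hstep : ∀ i j, G.Adj i j → ∀ k, x (i,k) = x (j,k) := by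
    intro i j hadj k
    have hk := (Finset.sum_eq_zero_iff_of_nonneg (fun k _ => mul_nonneg (by norm_num)
      (Finset.sum_nonneg fun i _ => Finset.sum_nonneg fun j _ => hterm k i j))).mp hz2 k
      (Finset.mem_univ k)
    have hT : (∑ i, ∑ j, (if G.Adj i j then β i j * (x (i,k) - x (j,k))^2 else 0)) = 0 := by
      linarith
    have hi := (Finset.sum_eq_zero_iff_of_nonneg
      (fun i _ => Finset.sum_nonneg fun j _ => hterm k i j)).mp hT i (Finset.mem_univ i)
    have hij := (Finset.sum_eq_zero_iff_of_nonneg (fun j _ => hterm k i j)).mp hi j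
      (Finset.mem_univ j)
    rw [if_pos hadj] at hij
    rcases mul_eq_zero.mp hij with h | h
    · exact absurd h (hβ i j hadj).ne'
    · have := pow_eq_zero_iff (n := 2) (by norm_num) |>.mp h
      linarith
  have hreach : ∀ i j, G.Reachable i j → ∀ k, x (i,k) = x (j,k) := by
    intro i j h
    obtain ⟨w⟩ := h
    induction w with
    | nil => intro k; rfl
    | cons hadj _ ih => intro k; exact (hstep _ _ hadj k).trans (ih k)
  set i0 : Fin N := ⟨0, by omega⟩ with hi0
  set c : Fin N → ℝ := fun k => x (i0, k) with hc
  have hxc : ∀ i k, x (i,k) = c k := fun i k => hreach i i0 (hG.preconnected i i0) k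
  have hAc : A *ᵥ c = 0 := by
    funext i
    have hSi := hS i
    simp only [hxc] at hSi
    simp only [mulVec, dotProduct, hA, Matrix.of_apply, Pi.zero_apply]
    exact hSi
  have hczero : c = 0 := by
    have h := congrArg (fun v => A⁻¹ *ᵥ v) hAc
    simpa [Matrix.mulVec_mulVec, Matrix.nonsing_inv_mul A hdet] using h
  funext p
  have : x (p.1, p.2) = c p.2 := hxc p.1 p.2
  rw [Prod.mk.eta] at this
  rw [this, hczero]
  rfl
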